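/- The limit lim_{n→∞} f(n)^{1/n} exists, where f(n) is the number of subsets of {1,...,n} in which no element divides another. Moreover the limit lies in [√2, 2]. -/

import Mathlib

open Finset Filter
open scoped Classical

/-- A finite set of naturals is primitive: no element divides another distinct element. -/
def Primitive (S : Finset ℕ) : Prop := ∀ a ∈ S, ∀ b ∈ S, a ≠ b → ¬ a ∣ b

/-- `f n` is the number of primitive subsets of `{1,...,n}`. -/
noncomputable def f (n : ℕ) : ℕ :=
  ((Finset.Icc 1 n).powerset.filter Primitive).card

/-- A natural is `k`-smooth: all its prime factors are at most the `k`-th prime. -/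
def SmoothNat (k m : ℕ) : Prop := ∀ p, p.Prime → p ∣ m → p ≤ Nat.nth Nat.Prime (k - 1)

/-- A set is `k`-core: no two distinct elements `a ∣ b` with `b/a` having all
prime factors at most the `k`-th prime. -/
def KCore (k : ℕ) (S : Finset ℕ) : Prop :=
  ∀ a ∈ S, ∀ b ∈ S, a ≠ b → ¬ (a ∣ b ∧ SmoothNat k (b / a))

/-- `fk n k` is the number of `k`-core subsets of `{1,...,n}`. -/
noncomputable def fk (n k : ℕ) : ℕ :=
  ((Finset.Icc 1 n).powerset.filter (KCore k)).card

/-- `Dk k` is the product of the first `k` primes. -/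
noncomputable def Dk (k : ℕ) : ℕ := ∏ i ∈ Finset.range k, Nat.nth Nat.Prime i

/-- `Pk k x` is the number of primitive subsets of the set of `k`-smooth integers in `{1,...,x}`. -/
noncomputable def Pk (k x : ℕ) : ℕ :=
  (((Finset.Icc 1 x).filter (SmoothNat k)).powerset.filter Primitive).card


namespace CE
open Topology


/-- `m` is `k`-rough: all prime factors exceed the smoothness bound. -/
def Rough (k m : ℕ) : Prop := ∀ q, q.Prime → q ∣ m → Nat.nth Nat.Prime (k-1) < q

noncomputable def RF (k n : ℕ) : Finset ℕ := (Finset.Icc 1 n).filter (Rough k)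

noncomputable def G (k n : ℕ) : ℕ := ∏ m ∈ RF k n, Pk k (n / m)

lemma prime_gt_nth {i q : ℕ} (hq : q.Prime) (h : Nat.nth Nat.Prime i < q) :
    Nat.nth Nat.Prime (i+1) ≤ q := by
  have h1 : Nat.nth Nat.Prime (Nat.count Nat.Prime q) = q := Nat.nth_count hq
  have hinf : (setOf Nat.Prime).Infinite := Nat.infinite_setOf_prime
  have h2 : i < Nat.count Nat.Prime q := by
    by_contra hc
    push_neg at hc
    have := (Nat.nth_le_nth hinf).2 hc
    omega
  calc Nat.nth Nat.Prime (i+1) ≤ Nat.nth Nat.Prime (Nat.count Nat.Prime q) :=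
        (Nat.nth_le_nth hinf).2 h2
    _ = q := h1

lemma exists_rough_smooth (k : ℕ) : ∀ x, 0 < x →
    ∃ m s, 0 < m ∧ 0 < s ∧ Rough k m ∧ SmoothNat k s ∧ x = m * s := by
  intro x
  induction x using Nat.strong_induction_on with
  | _ x ih =>
    intro hx
    by_cases hr : Rough k x
    · exact ⟨x, 1, hx, one_pos, hr, fun p hp hdvd => absurd (Nat.le_of_dvd one_pos hdvd) (by
        have := hp.two_le; omega), (mul_one x).symm⟩
    · simp only [Rough, not_forall] at hr
      obtain ⟨q, hq, hdvd, hle⟩ := hr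
      push_neg at hle
      obtain ⟨y, rfl⟩ := hdvd
      have hy : 0 < y := Nat.pos_of_mul_pos_left (by rwa [mul_comm] at hx)
      have hylt : y < q * y := by
        have := hq.two_le; nlinarith
      obtain ⟨m, s, hm, hs, hrm, hss, rfl⟩ := ih y hylt hy
      refine ⟨m, q * s, hm, Nat.mul_pos hq.pos hs, hrm, ?_, by ring⟩
      intro p hp hpd
      rcases (Nat.Prime.dvd_mul hp).1 hpd with h | h
      · have : p = q := (Nat.prime_dvd_prime_iff_eq hp hq).1 h
        omega
      · exact hss p hp h

lemma rough_smooth_unique {k m s m' s' : ℕ} (hm0 : 0 < m) (hs0 : 0 < s)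
    (hm'0 : 0 < m') (hm : Rough k m) (hs : SmoothNat k s)
    (hm' : Rough k m') (hs' : SmoothNat k s') (h : m * s = m' * s') :
    m = m' ∧ s = s' := by
  have key : ∀ a b c d : ℕ, 0 < a → Rough k a → SmoothNat k b → Rough k c → SmoothNat k d →
      a * b = c * d → a ∣ c := by
    intro a b c d ha hra hsb hrc hsd heq
    have hco : Nat.Coprime a d := by
      rw [Nat.coprime_iff_gcd_eq_one]
      by_contra hg
      have hgpos : Nat.gcd a d ≠ 0 := fun h0 => by
        have := Nat.eq_zero_of_gcd_eq_zero_left h0; omega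
      obtain ⟨q, hq, hqd⟩ := Nat.exists_prime_and_dvd hg
      have h1 := hra q hq (hqd.trans (Nat.gcd_dvd_left a d))
      have h2 := hsd q hq (hqd.trans (Nat.gcd_dvd_right a d))
      omega
    have : a ∣ c * d := heq ▸ Dvd.intro b rfl
    exact hco.dvd_of_dvd_mul_right this
  have h1 : m ∣ m' := key m s m' s' hm0 hm hs hm' hs' h
  have h2 : m' ∣ m := key m' s' m s hm'0 hm' hs' hm hs h.symm
  have hmm : m = m' := Nat.dvd_antisymm h1 h2
  subst hmm
  exact ⟨rfl, Nat.eq_of_mul_eq_mul_left hm0 h⟩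

lemma f_le_G (k n : ℕ) : f n ≤ G k n := by
  have hG : G k n = ((RF k n).pi (fun m =>
      ((Finset.Icc 1 (n / m)).filter (SmoothNat k)).powerset.filter Primitive)).card := by
    rw [Finset.card_pi]; rfl
  rw [hG, f]
  apply Finset.card_le_card_of_injOn
    (fun S => fun m _ => (Finset.Icc 1 (n / m)).filter (fun s => SmoothNat k s ∧ m * s ∈ S))
  · intro S hS
    simp only [Finset.mem_coe, Finset.mem_filter, Finset.mem_powerset] at hS
    rw [Finset.mem_coe, Finset.mem_pi]
    intro m hm
    simp only [RF, Finset.mem_filter, Finset.mem_Icc] at hm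
    rw [Finset.mem_filter, Finset.mem_powerset]
    constructor
    · intro s hs
      rw [Finset.mem_filter] at hs ⊢
      exact ⟨hs.1, hs.2.1⟩
    · intro a ha b hb hab hdvd
      rw [Finset.mem_filter] at ha hb
      refine hS.2 (m * a) ha.2.2 (m * b) hb.2.2 ?_ (mul_dvd_mul_left m hdvd)
      have : 0 < m := by omega
      exact fun hc => hab (Nat.eq_of_mul_eq_mul_left this hc)
  · intro S hS S' hS' hEq
    simp only [Finset.mem_coe, Finset.mem_filter, Finset.mem_powerset] at hS hS'
    have main : ∀ T T' : Finset ℕ, T ⊆ Finset.Icc 1 n →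
        ((fun m (_ : m ∈ RF k n) => (Finset.Icc 1 (n / m)).filter
          (fun s => SmoothNat k s ∧ m * s ∈ T)) =
         (fun m (_ : m ∈ RF k n) => (Finset.Icc 1 (n / m)).filter
          (fun s => SmoothNat k s ∧ m * s ∈ T'))) → ∀ x ∈ T, x ∈ T' := by
      intro T T' hT hE x hx
      have hx1 := hT hx
      rw [Finset.mem_Icc] at hx1
      obtain ⟨m, s, hm0, hs0, hrm, hsm, rfl⟩ := exists_rough_smooth k x (by omega)
      have hmRF : m ∈ RF k n := by
        simp only [RF, Finset.mem_filter, Finset.mem_Icc]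
        refine ⟨⟨hm0, ?_⟩, hrm⟩
        calc m ≤ m * s := Nat.le_mul_of_pos_right m hs0
          _ ≤ n := hx1.2
      have hsmem : s ∈ (Finset.Icc 1 (n / m)).filter (fun s => SmoothNat k s ∧ m * s ∈ T) := by
        rw [Finset.mem_filter, Finset.mem_Icc]
        refine ⟨⟨hs0, ?_⟩, hsm, hx⟩
        rw [Nat.le_div_iff_mul_le hm0, mul_comm]
        exact hx1.2
      have := congrFun (congrFun hE m) hmRF
      rw [this] at hsmem
      rw [Finset.mem_filter] at hsmem
      exact hsmem.2.2
    ext x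
    exact ⟨main S S' hS.1 hEq x, main S' S hS'.1 hEq.symm x⟩




lemma primitive_empty : Primitive ∅ := by intro a ha; simp at ha

lemma Pk_pos (k x : ℕ) : 0 < Pk k x := by
  rw [Pk, Finset.card_pos]
  exact ⟨∅, Finset.mem_filter.2 ⟨Finset.empty_mem_powerset _, primitive_empty⟩⟩

lemma Pk_mono (k : ℕ) {x y : ℕ} (h : x ≤ y) : Pk k x ≤ Pk k y := by
  apply Finset.card_le_card
  intro S hS
  rw [Finset.mem_filter, Finset.mem_powerset] at hS ⊢
  exact ⟨hS.1.trans (Finset.filter_subset_filter _ (Finset.Icc_subset_Icc_right h)), hS.2⟩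

lemma Pk_zero (k : ℕ) : Pk k 0 = 1 := by
  rw [Pk, show Finset.Icc 1 0 = (∅ : Finset ℕ) by simp]
  simp only [Finset.filter_empty, Finset.powerset_empty]
  rw [Finset.filter_singleton, if_pos primitive_empty, Finset.card_singleton]

lemma smooth_count_le (k x : ℕ) (hk : 1 ≤ k) :
    ((Finset.Icc 1 x).filter (SmoothNat k)).card ≤ (Nat.log 2 x + 1) ^ k := by
  classical
  have := Finset.card_le_card_of_injOn
    (f := fun m : ℕ => fun i : Fin k => m.factorization (Nat.nth Nat.Prime i))
    (s := (Finset.Icc 1 x).filter (SmoothNat k))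
    (t := Fintype.piFinset (fun _ : Fin k => Finset.range (Nat.log 2 x + 1)))
    ?_ ?_
  · calc _ ≤ _ := this
      _ = (Nat.log 2 x + 1) ^ k := by
        rw [Fintype.card_piFinset]
        simp [Finset.prod_const]
  · intro m hm
    rw [Finset.mem_coe, Finset.mem_filter, Finset.mem_Icc] at hm
    rw [Finset.mem_coe, Fintype.mem_piFinset]
    intro i
    rw [Finset.mem_range, Nat.lt_succ_iff]
    set p := Nat.nth Nat.Prime i
    have hp : p.Prime := Nat.prime_nth_prime i
    have hdvd : p ^ m.factorization p ∣ m := Nat.ordProj_dvd m p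
    have hm0 : m ≠ 0 := by omega
    have h1 : p ^ m.factorization p ≤ m := Nat.le_of_dvd (by omega) hdvd
    have h2 : 2 ^ m.factorization p ≤ m :=
      le_trans (Nat.pow_le_pow_left hp.two_le _) h1
    have : m.factorization p ≤ Nat.log 2 m := (Nat.le_log_iff_pow_le one_lt_two hm0).2 h2
    exact this.trans (Nat.log_mono_right hm.1.2)
  · intro a ha b hb hEq
    rw [Finset.mem_coe, Finset.mem_filter, Finset.mem_Icc] at ha hb
    have ha0 : a ≠ 0 := by omega
    have hb0 : b ≠ 0 := by omega
    apply Nat.factorization_inj (by simpa using ha0) (by simpa using hb0)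
    ext q
    by_cases hq : q.Prime
    · by_cases hql : q ≤ Nat.nth Nat.Prime (k - 1)
      · have hcount : Nat.nth Nat.Prime (Nat.count Nat.Prime q) = q := Nat.nth_count hq
        have hlt : Nat.count Nat.Prime q < k := by
          have h1 : Nat.count Nat.Prime q ≤ Nat.count Nat.Prime (Nat.nth Nat.Prime (k-1)) := by
            apply Nat.count_monotone
            calc q ≤ Nat.nth Nat.Prime (k-1) := hql
              _ ≤ _ := le_refl _
          have h2 : Nat.count Nat.Prime (Nat.nth Nat.Prime (k-1)) = k - 1 :=
            Nat.count_nth_of_infinite Nat.infinite_setOf_prime (k-1)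
          omega
        have := congrFun hEq ⟨Nat.count Nat.Prime q, hlt⟩
        simpa [hcount] using this
      · have h1 : a.factorization q = 0 := by
          apply Nat.factorization_eq_zero_of_not_dvd
          intro hdvd
          exact hql (ha.2 q hq hdvd)
        have h2 : b.factorization q = 0 := by
          apply Nat.factorization_eq_zero_of_not_dvd
          intro hdvd
          exact hql (hb.2 q hq hdvd)
        simp [h1, h2]
    · simp [Nat.factorization_eq_zero_of_not_prime _ hq]

noncomputable def gk (k m : ℕ) : ℝ := Real.log (Pk k m)

lemma gk_nonneg (k m : ℕ) : 0 ≤ gk k m :=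
  Real.log_nonneg (by exact_mod_cast Pk_pos k m)

lemma gk_mono (k : ℕ) {x y : ℕ} (h : x ≤ y) : gk k x ≤ gk k y :=
  Real.log_le_log (by exact_mod_cast Pk_pos k x) (by exact_mod_cast Pk_mono k h)

lemma gk_zero (k : ℕ) : gk k 0 = 0 := by rw [gk, Pk_zero]; simp

lemma gk_le (k m : ℕ) (hk : 1 ≤ k) :
    gk k m ≤ ((Nat.log 2 m + 1 : ℕ) : ℝ) ^ k * Real.log 2 := by
  have h1 : Pk k m ≤ 2 ^ ((Finset.Icc 1 m).filter (SmoothNat k)).card := by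
    rw [Pk, ← Finset.card_powerset]
    exact Finset.card_le_card (Finset.filter_subset _ _)
  have h2 : (Pk k m : ℝ) ≤ 2 ^ (((Finset.Icc 1 m).filter (SmoothNat k)).card : ℕ) := by
    exact_mod_cast h1
  calc gk k m ≤ Real.log (2 ^ (((Finset.Icc 1 m).filter (SmoothNat k)).card : ℕ)) :=
        Real.log_le_log (by exact_mod_cast Pk_pos k m) h2
    _ = (((Finset.Icc 1 m).filter (SmoothNat k)).card : ℝ) * Real.log 2 := by
        rw [Real.log_pow]
    _ ≤ _ := by
        apply mul_le_mul_of_nonneg_right _ (Real.log_nonneg one_le_two)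
        exact_mod_cast smooth_count_le k m hk

/-- elementary bound `(log z)^k ≤ (2k)^k √z` for `z ≥ 1`. -/
lemma log_pow_le (k : ℕ) (hk : 1 ≤ k) {z : ℝ} (hz : 1 ≤ z) :
    (Real.log z) ^ k ≤ (2 * k : ℝ) ^ k * Real.sqrt z := by
  have hz0 : 0 < z := by linarith
  have hw : Real.log z ≤ (2 * k) * z ^ ((1:ℝ) / (2 * k)) := by
    have h1 : Real.log (z ^ ((1:ℝ)/(2*k))) = ((1:ℝ)/(2*k)) * Real.log z := Real.log_rpow hz0 _
    have h2 : Real.log (z ^ ((1:ℝ)/(2*k))) ≤ z ^ ((1:ℝ)/(2*k)) := by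
      have := Real.log_le_sub_one_of_pos (Real.rpow_pos_of_pos hz0 ((1:ℝ)/(2*k)))
      linarith
    have hkpos : (0:ℝ) < 2 * k := by positivity
    rw [h1] at h2
    calc Real.log z = (2*k) * (((1:ℝ)/(2*k)) * Real.log z) := by field_simp
      _ ≤ (2*k) * z ^ ((1:ℝ)/(2*k)) := by
          apply mul_le_mul_of_nonneg_left h2 (by positivity)
  have hlog0 : 0 ≤ Real.log z := Real.log_nonneg hz
  calc (Real.log z) ^ k ≤ ((2*k) * z ^ ((1:ℝ)/(2*k))) ^ k := by
        apply pow_le_pow_left₀ hlog0 hw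
    _ = (2*k:ℝ)^k * (z ^ ((1:ℝ)/(2*k)))^k := mul_pow _ _ _
    _ = (2*k:ℝ)^k * Real.sqrt z := by
        congr 1
        rw [← Real.rpow_natCast (z ^ ((1:ℝ)/(2*k))) k, ← Real.rpow_mul (le_of_lt hz0)]
        rw [Real.sqrt_eq_rpow]
        congr 1
        field_simp

/-- the master growth bound: `gk k m ≤ C √m`. -/
lemma gk_sqrt_bound (k : ℕ) (hk : 1 ≤ k) :
    ∃ C : ℝ, 0 < C ∧ ∀ m : ℕ, gk k m ≤ C * Real.sqrt m := by
  have hl2 : (0:ℝ) < Real.log 2 := Real.log_pos one_lt_two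
  refine ⟨(2*k:ℝ)^k * Real.sqrt (Real.exp 1) * Real.log 2 / (Real.log 2)^k + 1, by positivity, ?_⟩
  intro m
  rcases Nat.eq_zero_or_pos m with rfl | hm
  · rw [gk_zero]; positivity
  have hm1 : (1:ℝ) ≤ m := by exact_mod_cast hm
  -- step 1 : Nat.log 2 m + 1 ≤ (log m + 1)/log 2
  have hstep1 : ((Nat.log 2 m + 1 : ℕ) : ℝ) ≤ (Real.log m + 1) / Real.log 2 := by
    have hpow : (2:ℕ) ^ Nat.log 2 m ≤ m := Nat.pow_log_le_self 2 (by omega)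
    have hpow' : (2:ℝ) ^ (Nat.log 2 m) ≤ (m:ℝ) := by exact_mod_cast hpow
    have h3 : (Nat.log 2 m : ℝ) * Real.log 2 ≤ Real.log m := by
      rw [← Real.log_pow]
      exact Real.log_le_log (by positivity) hpow'
    have h4 : Real.log 2 ≤ 1 := by
      have := Real.log_le_sub_one_of_pos (by norm_num : (0:ℝ) < 2); linarith
    rw [le_div_iff₀ hl2]
    push_cast
    have : (0:ℝ) ≤ (Nat.log 2 m : ℝ) := Nat.cast_nonneg _
    nlinarith
  have hstep1' : (0:ℝ) ≤ (Real.log m + 1) / Real.log 2 := by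
    have := Real.log_nonneg hm1; positivity
  -- step 2 : (log m + 1)^k ≤ (2k)^k √e √m
  have hstep2 : (Real.log m + 1) ^ k ≤ (2*k:ℝ)^k * Real.sqrt (Real.exp 1) * Real.sqrt m := by
    have hz : (1:ℝ) ≤ Real.exp 1 * m := by
      have : (1:ℝ) ≤ Real.exp 1 := by
        have := Real.add_one_le_exp (1:ℝ); linarith
      nlinarith
    have := log_pow_le k hk hz
    have hlogem : Real.log (Real.exp 1 * m) = Real.log m + 1 := by
      rw [Real.log_mul (by positivity) (by positivity), Real.log_exp]; ring
    rw [hlogem] at this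
    calc (Real.log m + 1)^k ≤ (2*k:ℝ)^k * Real.sqrt (Real.exp 1 * m) := this
      _ = (2*k:ℝ)^k * Real.sqrt (Real.exp 1) * Real.sqrt m := by
          rw [Real.sqrt_mul (by positivity), mul_assoc]
  calc gk k m ≤ ((Nat.log 2 m + 1 : ℕ):ℝ)^k * Real.log 2 := gk_le k m hk
    _ ≤ ((Real.log m + 1)/Real.log 2)^k * Real.log 2 := by
        apply mul_le_mul_of_nonneg_right _ (le_of_lt hl2)
        exact pow_le_pow_left₀ (by positivity) hstep1 k
    _ = (Real.log m + 1)^k * Real.log 2 / (Real.log 2)^k := by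
        rw [div_pow]; ring
    _ ≤ ((2*k:ℝ)^k * Real.sqrt (Real.exp 1) * Real.sqrt m) * Real.log 2 / (Real.log 2)^k := by
        gcongr
    _ = ((2*k:ℝ)^k * Real.sqrt (Real.exp 1) * Real.log 2 / (Real.log 2)^k) * Real.sqrt m := by
        ring
    _ ≤ _ := by
        have h0 : (0:ℝ) ≤ Real.sqrt m := Real.sqrt_nonneg _
        nlinarith [h0]


section Gle
variable (k n : ℕ)

/-- union of the classes encoded by a pi-family -/
noncomputable def U (F : ∀ m ∈ RF k n, Finset ℕ) : Finset ℕ :=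
  (RF k n).attach.biUnion (fun m => (F m.1 m.2).image (fun s => m.1 * s))

lemma mem_U {F : ∀ m ∈ RF k n, Finset ℕ} {x : ℕ} :
    x ∈ U k n F ↔ ∃ m, ∃ h : m ∈ RF k n, ∃ s ∈ F m h, x = m * s := by
  simp only [U, Finset.mem_biUnion, Finset.mem_attach, Finset.mem_image, true_and,
    Subtype.exists]
  constructor
  · rintro ⟨m, hm, s, hs, rfl⟩; exact ⟨m, hm, s, hs, rfl⟩
  · rintro ⟨m, hm, s, hs, rfl⟩; exact ⟨m, hm, s, hs, rfl⟩

lemma G_le (hk : 1 ≤ k) : G k n ≤ f n * 2 ^ (n / Nat.nth Nat.Prime k) := by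
  classical
  set p := Nat.nth Nat.Prime k with hp
  have hppos : 0 < p := (Nat.prime_nth_prime k).pos
  have hG : G k n = ((RF k n).pi (fun m =>
      ((Finset.Icc 1 (n / m)).filter (SmoothNat k)).powerset.filter Primitive)).card := by
    rw [Finset.card_pi]; rfl
  have htarget : f n * 2 ^ (n / p) =
      (((Finset.Icc 1 n).powerset.filter Primitive) ×ˢ (Finset.Icc 1 (n / p)).powerset).card := by
    rw [Finset.card_product, Finset.card_powerset, Nat.card_Icc, Nat.add_sub_cancel, f]
  rw [hG, htarget]
  -- facts about members of the pi set
  set Q := fun m => ((Finset.Icc 1 (n / m)).filter (SmoothNat k)).powerset.filter Primitive with hQ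
  have hfacts : ∀ F ∈ (RF k n).pi Q, ∀ m (h : m ∈ RF k n), ∀ s ∈ F m h,
      (1 ≤ s ∧ s ≤ n / m ∧ SmoothNat k s) := by
    intro F hF m hm s hs
    rw [Finset.mem_pi] at hF
    have := hF m hm
    rw [hQ, Finset.mem_filter, Finset.mem_powerset] at this
    have := this.1 hs
    rw [Finset.mem_filter, Finset.mem_Icc] at this
    exact ⟨this.1.1, this.1.2, this.2⟩
  have hFprim : ∀ F ∈ (RF k n).pi Q, ∀ m (h : m ∈ RF k n), Primitive (F m h) := by
    intro F hF m hm
    rw [Finset.mem_pi] at hF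
    have := hF m hm
    rw [hQ, Finset.mem_filter] at this
    exact this.2
  have hmpos : ∀ m ∈ RF k n, 1 ≤ m ∧ m ≤ n ∧ Rough k m := by
    intro m hm
    simp only [RF, Finset.mem_filter, Finset.mem_Icc] at hm
    exact ⟨hm.1.1, hm.1.2, hm.2⟩
  have hUsub : ∀ F ∈ (RF k n).pi Q, U k n F ⊆ Finset.Icc 1 n := by
    intro F hF x hx
    rw [mem_U] at hx
    obtain ⟨m, hm, s, hs, rfl⟩ := hx
    obtain ⟨hs1, hs2, _⟩ := hfacts F hF m hm s hs
    obtain ⟨hm1, hm2, _⟩ := hmpos m hm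
    rw [Finset.mem_Icc]
    constructor
    · exact Nat.one_le_iff_ne_zero.2 (by positivity)
    · calc m * s ≤ m * (n / m) := Nat.mul_le_mul_left m hs2
        _ ≤ n := Nat.mul_div_le n m
  apply Finset.card_le_card_of_injOn
    (fun F => ((U k n F).filter (fun x => n / p < x), (U k n F).filter (fun x => x ≤ n / p)))
  · intro F hF
    rw [Finset.mem_coe, Finset.mem_product]
    constructor
    · -- top part is primitive
      rw [Finset.mem_filter, Finset.mem_powerset]
      constructor
      · exact fun x hx => hUsub F hF (Finset.mem_filter.1 hx).1
      · intro a ha b hb hab hdvd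
        rw [Finset.mem_filter] at ha hb
        obtain ⟨haU, hagt⟩ := ha
        obtain ⟨hbU, _⟩ := hb
        rw [mem_U] at haU hbU
        obtain ⟨m, hm, s, hs, rfl⟩ := haU
        obtain ⟨m', hm', s', hs', rfl⟩ := hbU
        obtain ⟨hs1, hs2, hssm⟩ := hfacts F hF m hm s hs
        obtain ⟨hs'1, hs'2, hs'sm⟩ := hfacts F hF m' hm' s' hs'
        obtain ⟨hm1, hm2, hmr⟩ := hmpos m hm
        obtain ⟨hm'1, hm'2, hm'r⟩ := hmpos m' hm'
        obtain ⟨t, ht⟩ := hdvd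
        have htpos : 0 < t := by
          rcases Nat.eq_zero_or_pos t with h0 | h
          · rw [h0, mul_zero] at ht
            have : 0 < m' * s' := by positivity
            omega
          · exact h
        by_cases hsmt : SmoothNat k t
        · -- ratio smooth: forces m = m', contradiction via primitivity of F m
          have heq : m * (s * t) = m' * s' := by rw [ht]; ring
          have hsmst : SmoothNat k (s * t) := by
            intro q hq hqd
            rcases (Nat.Prime.dvd_mul hq).1 hqd with h | h
            · exact hssm q hq h
            · exact hsmt q hq h
          obtain ⟨hmm, hss⟩ := rough_smooth_unique hm1 (by positivity) hm'1 hmr hsmst hm'r hs'sm heq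
          subst hmm
          have hsds' : s ∣ s' := hss ▸ dvd_mul_right s t
          have hsne : s ≠ s' := by
            intro hc; exact hab (by rw [hc])
          exact hFprim F hF m hm s hs s' hs' hsne hsds'
        · -- ratio has a large prime factor
          simp only [SmoothNat, not_forall] at hsmt
          obtain ⟨q, hq, hqd, hqgt⟩ := hsmt
          push_neg at hqgt
          have hqp : p ≤ q := by
            have : k - 1 + 1 = k := by omega
            rw [hp, ← this]
            exact prime_gt_nth hq hqgt
          have htq : q ≤ t := Nat.le_of_dvd htpos hqd
          have hbig : n < m * s * t := by
            have h1 : n / p + 1 ≤ m * s := hagt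
            have h2 : p ≤ t := le_trans hqp htq
            have h3 : n < (n / p + 1) * p := by
              have := Nat.div_add_mod n p
              have := Nat.mod_lt n hppos
              nlinarith
            calc n < (n / p + 1) * p := h3
              _ ≤ (m * s) * t := Nat.mul_le_mul h1 h2
          have hle : m' * s' ≤ n := by
            have := hUsub F hF
            have hmem : m' * s' ∈ Finset.Icc 1 n := this (by rw [mem_U]; exact ⟨m', hm', s', hs', rfl⟩)
            exact (Finset.mem_Icc.1 hmem).2
          rw [ht] at hle
          omega
    · rw [Finset.mem_powerset]
      intro x hx
      rw [Finset.mem_filter] at hx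
      have := hUsub F hF hx.1
      rw [Finset.mem_Icc] at this ⊢
      exact ⟨this.1, hx.2⟩
  · -- injectivity
    intro F hF F' hF' hEq
    simp only [Prod.mk.injEq] at hEq
    have hUeq : U k n F = U k n F' := by
      have h1 := Finset.filter_union_filter_not_eq (p := fun x => n / p < x) (U k n F)
      have h2 := Finset.filter_union_filter_not_eq (p := fun x => n / p < x) (U k n F')
      rw [← h1, ← h2, hEq.1]
      congr 1
      · have e1 : (U k n F).filter (fun x => ¬ n / p < x) = (U k n F).filter (fun x => x ≤ n / p) := by
          apply Finset.filter_congr; intro x _; simp [not_lt]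
        have e2 : (U k n F').filter (fun x => ¬ n / p < x) = (U k n F').filter (fun x => x ≤ n / p) := by
          apply Finset.filter_congr; intro x _; simp [not_lt]
        rw [e1, e2, hEq.2]
    have main : ∀ (A B : ∀ m ∈ RF k n, Finset ℕ), A ∈ (RF k n).pi Q → B ∈ (RF k n).pi Q →
        U k n A = U k n B → ∀ m (h : m ∈ RF k n), ∀ s ∈ A m h, s ∈ B m h := by
      intro A B hA hB hU m hm s hs
      have hxA : m * s ∈ U k n A := by rw [mem_U]; exact ⟨m, hm, s, hs, rfl⟩
      rw [hU, mem_U] at hxA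
      obtain ⟨m', hm', s', hs', heq⟩ := hxA
      obtain ⟨hs1, _, hssm⟩ := hfacts A hA m hm s hs
      obtain ⟨hs'1, _, hs'sm⟩ := hfacts B hB m' hm' s' hs'
      obtain ⟨hm1, _, hmr⟩ := hmpos m hm
      obtain ⟨hm'1, _, hm'r⟩ := hmpos m' hm'
      obtain ⟨hmm, hss⟩ := rough_smooth_unique hm1 (by omega) hm'1 hmr hssm hm'r hs'sm heq
      subst hmm; rw [hss]; exact hs'
    funext m hm
    ext s
    exact ⟨fun h => main F F' hF hF' hUeq m hm s h, fun h => main F' F hF' hF hUeq.symm m hm s h⟩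

end Gle


noncomputable def dg (k i : ℕ) : ℝ := gk k (i+1) - gk k i

lemma RF_zero (k : ℕ) : RF k 0 = ∅ := by
  rw [RF, show Finset.Icc 1 0 = (∅ : Finset ℕ) by simp, Finset.filter_empty]

lemma RF_card_le (k x : ℕ) : (RF k x).card ≤ x := by
  calc (RF k x).card ≤ (Finset.Icc 1 x).card := Finset.card_le_card (Finset.filter_subset _ _)
    _ = x := by simp

lemma log_G_eq (k n : ℕ) :
    Real.log (G k n) = ∑ i ∈ Finset.range n, dg k i * ((RF k (n / (i+1))).card : ℝ) := by
  have h1 : Real.log (G k n) = ∑ m ∈ RF k n, gk k (n / m) := by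
    rw [G]
    push_cast
    rw [Real.log_prod]
    · rfl
    · intro m _
      have := Pk_pos k (n / m)
      positivity
  rw [h1]
  have h2 : ∀ m ∈ RF k n, gk k (n / m) =
      ∑ i ∈ Finset.range n, (if i < n / m then dg k i else 0) := by
    intro m hm
    have hnm : n / m ≤ n := Nat.div_le_self n m
    rw [← Finset.sum_filter]
    have : (Finset.range n).filter (fun i => i < n / m) = Finset.range (n / m) := by
      ext i
      simp only [Finset.mem_filter, Finset.mem_range]
      omega
    rw [this]
    have := Finset.sum_range_sub (gk k) (n / m)
    rw [gk_zero, sub_zero] at this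
    rw [← this]
    rfl
  rw [Finset.sum_congr rfl h2, Finset.sum_comm]
  apply Finset.sum_congr rfl
  intro i _
  have hfilter : (RF k n).filter (fun m => i < n / m) = RF k (n / (i+1)) := by
    ext m
    simp only [RF, Finset.mem_filter, Finset.mem_Icc]
    constructor
    · rintro ⟨⟨⟨hm1, hm2⟩, hr⟩, hlt⟩
      refine ⟨⟨hm1, ?_⟩, hr⟩
      rw [Nat.le_div_iff_mul_le (by omega : 0 < i + 1)]
      have : (i+1) ≤ n / m := hlt
      rw [Nat.le_div_iff_mul_le (by omega : 0 < m)] at this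
      calc m * (i+1) = (i+1) * m := by ring
        _ ≤ n := this
    · rintro ⟨⟨hm1, hm2⟩, hr⟩
      have hmn : m ≤ n := le_trans hm2 (Nat.div_le_self n (i+1))
      refine ⟨⟨⟨hm1, hmn⟩, hr⟩, ?_⟩
      have h3 : m * (i+1) ≤ n := by
        rw [← Nat.le_div_iff_mul_le (by omega : 0 < i + 1)]
        exact hm2
      have h4 : (i+1) * m ≤ n := by rw [mul_comm]; exact h3
      have h5 : (i+1) ≤ n / m := by rw [Nat.le_div_iff_mul_le (by omega : 0 < m)]; exact h4
      omega
  rw [← hfilter, ← Finset.sum_filter, Finset.sum_const, nsmul_eq_mul, mul_comm]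

/- roughness is coprimality to `Dk k` -/
lemma nth_mono_le {i j : ℕ} (h : i ≤ j) : Nat.nth Nat.Prime i ≤ Nat.nth Nat.Prime j :=
  (Nat.nth_le_nth Nat.infinite_setOf_prime).2 h

lemma prime_dvd_Dk {k q : ℕ} (hk : 1 ≤ k) (hq : q.Prime) :
    q ∣ Dk k ↔ q ≤ Nat.nth Nat.Prime (k-1) := by
  constructor
  · intro hdvd
    obtain ⟨i, hi, hqd⟩ := hq.prime.exists_mem_finset_dvd hdvd
    rw [Finset.mem_range] at hi
    have : q = Nat.nth Nat.Prime i := ((Nat.prime_dvd_prime_iff_eq hq (Nat.prime_nth_prime i)).1 hqd)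
    rw [this]
    exact nth_mono_le (by omega)
  · intro hle
    have hcount : Nat.nth Nat.Prime (Nat.count Nat.Prime q) = q := Nat.nth_count hq
    have hlt : Nat.count Nat.Prime q < k := by
      have h1 : Nat.count Nat.Prime q ≤ Nat.count Nat.Prime (Nat.nth Nat.Prime (k-1)) :=
        Nat.count_monotone _ hle
      have h2 : Nat.count Nat.Prime (Nat.nth Nat.Prime (k-1)) = k - 1 :=
        Nat.count_nth_of_infinite Nat.infinite_setOf_prime (k-1)
      omega
    rw [← hcount]
    exact Finset.dvd_prod_of_mem _ (Finset.mem_range.2 hlt)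

lemma rough_iff_coprime {k m : ℕ} (hk : 1 ≤ k) (hm : 1 ≤ m) :
    Rough k m ↔ (Dk k).Coprime m := by
  constructor
  · intro hr
    rw [Nat.coprime_iff_gcd_eq_one]
    by_contra hg
    have hD : 0 < Dk k := Finset.prod_pos (fun i _ => (Nat.prime_nth_prime i).pos)
    have hgne : Nat.gcd (Dk k) m ≠ 0 := fun h0 => by
      have := Nat.eq_zero_of_gcd_eq_zero_left h0; omega
    obtain ⟨q, hq, hqd⟩ := Nat.exists_prime_and_dvd hg
    have h1 := (prime_dvd_Dk hk hq).1 (hqd.trans (Nat.gcd_dvd_left _ _))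
    have h2 := hr q hq (hqd.trans (Nat.gcd_dvd_right _ _))
    omega
  · intro hco q hq hqd
    by_contra hle
    push_neg at hle
    have h1 : q ∣ Dk k := (prime_dvd_Dk hk hq).2 hle
    have : q ∣ Nat.gcd (Dk k) m := Nat.dvd_gcd h1 hqd
    rw [Nat.coprime_iff_gcd_eq_one.1 hco] at this
    exact hq.one_lt.ne' (Nat.eq_one_of_dvd_one this ▸ rfl)

/- counting coprimes in Icc 1 x -/
noncomputable def cc (k x : ℕ) : ℕ := ((Finset.Ico 1 (x+1)).filter ((Dk k).Coprime)).card

lemma RF_eq_cc {k x : ℕ} (hk : 1 ≤ k) : (RF k x).card = cc k x := by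
  rw [RF, cc, Finset.Ico_add_one_right_eq_Icc]
  congr 1
  apply Finset.filter_congr
  intro m hm
  rw [Finset.mem_Icc] at hm
  exact rough_iff_coprime hk hm.1

lemma cc_step (k x : ℕ) : cc k (x + Dk k) = cc k x + (Dk k).totient := by
  rw [cc, cc]
  have hsplit : Finset.Ico 1 (x + Dk k + 1) = Finset.Ico 1 (x+1) ∪ Finset.Ico (x+1) (x+1 + Dk k) := by
    rw [Finset.Ico_union_Ico_eq_Ico (by omega) (by omega)]
    congr 1
    omega
  rw [hsplit, Finset.filter_union, Finset.card_union_of_disjoint]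
  · congr 1
    exact Nat.filter_coprime_Ico_eq_totient (Dk k) (x+1)
  · apply Finset.disjoint_filter_filter
    exact Finset.Ico_disjoint_Ico_consecutive 1 (x+1) (x+1+Dk k)

lemma cc_mono (k : ℕ) : Monotone (cc k) := by
  intro a b hab
  apply Finset.card_le_card
  apply Finset.filter_subset_filter
  exact Finset.Ico_subset_Ico le_rfl (by omega)

lemma cc_D (k : ℕ) : cc k (Dk k) = (Dk k).totient := by
  have := cc_step k 0
  rw [zero_add] at this
  rw [this, cc]
  simp

lemma cc_bounds (k x : ℕ) :
    (Dk k).totient * (x / Dk k) ≤ cc k x ∧ cc k x ≤ (Dk k).totient * (x / Dk k) + (Dk k).totient := by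
  have hD : 0 < Dk k := Finset.prod_pos (fun i _ => (Nat.prime_nth_prime i).pos)
  have key : ∀ q r, cc k (q * Dk k + r) = q * (Dk k).totient + cc k r := by
    intro q
    induction q with
    | zero => intro r; simp
    | succ q ih =>
      intro r
      have : (q+1) * Dk k + r = (q * Dk k + r) + Dk k := by ring
      rw [this, cc_step, ih]
      ring
  have hx : Dk k * (x / Dk k) + x % Dk k = x := Nat.div_add_mod x (Dk k)
  have hx2 : (x / Dk k) * Dk k + x % Dk k = x := by rw [mul_comm]; exact Nat.div_add_mod x (Dk k)
  have h1 : cc k x = (x / Dk k) * (Dk k).totient + cc k (x % Dk k) := by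
    conv_lhs => rw [← hx2]
    rw [key]
  constructor
  · rw [h1]; have := Nat.zero_le (cc k (x % Dk k)); nlinarith [Nat.zero_le (cc k (x % Dk k))]
  · rw [h1]
    have h2 : cc k (x % Dk k) ≤ (Dk k).totient := by
      rw [← cc_D k]
      exact cc_mono k (le_of_lt (Nat.mod_lt x hD))
    nlinarith

lemma cast_div_tendsto (t : ℕ) (ht : 0 < t) :
    Tendsto (fun n : ℕ => ((n / t : ℕ) : ℝ) / n) atTop (𝓝 (1 / t)) := by
  have hlow : ∀ n : ℕ, 1 ≤ n → ((n:ℝ)/t - 1)/n ≤ ((n / t : ℕ) : ℝ) / n := by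
    intro n hn
    have hn' : (0:ℝ) < n := by exact_mod_cast hn
    apply (div_le_div_iff_of_pos_right hn').2
    have h : (t:ℝ) * ((n / t : ℕ):ℝ) + ((n % t : ℕ):ℝ) = n := by
      exact_mod_cast Nat.div_add_mod n t
    have h2 : ((n % t : ℕ):ℝ) < t := by exact_mod_cast Nat.mod_lt n ht
    have ht' : (0:ℝ) < t := by exact_mod_cast ht
    rw [div_sub_one (ne_of_gt ht'), div_le_iff₀ ht']
    nlinarith
  have hhigh : ∀ n : ℕ, ((n / t : ℕ) : ℝ) / n ≤ ((n:ℝ)/t)/n := by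
    intro n
    rcases Nat.eq_zero_or_pos n with rfl | hn
    · simp
    have hn' : (0:ℝ) < n := by exact_mod_cast hn
    exact (div_le_div_iff_of_pos_right hn').2 Nat.cast_div_le
  apply tendsto_of_tendsto_of_tendsto_of_le_of_le'
    (g := fun n : ℕ => ((n:ℝ)/t - 1)/n) (h := fun n : ℕ => ((n:ℝ)/t)/n)
  · -- lower tendsto
    have : (fun n : ℕ => ((n:ℝ)/t - 1)/n) =ᶠ[atTop] (fun n : ℕ => 1/t - 1/n) := by
      filter_upwards [eventually_gt_atTop 0] with n hn
      have hn' : (n:ℝ) ≠ 0 := by positivity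
      field_simp
    rw [tendsto_congr' this]
    have h2 : Tendsto (fun n : ℕ => 1/(n:ℝ)) atTop (𝓝 0) := tendsto_one_div_atTop_nhds_zero_nat
    have := Tendsto.sub (tendsto_const_nhds (x := (1:ℝ)/t)) h2
    simpa using this
  · have : (fun n : ℕ => ((n:ℝ)/t)/n) =ᶠ[atTop] (fun _ : ℕ => 1/t) := by
      filter_upwards [eventually_gt_atTop 0] with n hn
      have hn' : (n:ℝ) ≠ 0 := by positivity
      field_simp
    rw [tendsto_congr' this]
    exact tendsto_const_nhds
  · filter_upwards [eventually_ge_atTop 1] with n hn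
    exact hlow n hn
  · filter_upwards [] with n
    exact hhigh n

lemma RF_tendsto (k j : ℕ) (hk : 1 ≤ k) (hj : 0 < j) :
    Tendsto (fun n : ℕ => ((RF k (n / j)).card : ℝ) / n) atTop
      (𝓝 (((Dk k).totient : ℝ) / (j * Dk k))) := by
  have hD : 0 < Dk k := Finset.prod_pos (fun i _ => (Nat.prime_nth_prime i).pos)
  have hjD : 0 < j * Dk k := by positivity
  have hmain := (cast_div_tendsto (j * Dk k) hjD).const_mul ((Dk k).totient : ℝ)
  have hzero : Tendsto (fun n : ℕ => ((Dk k).totient : ℝ) / n) atTop (𝓝 0) := by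
    apply Tendsto.comp (tendsto_const_div_atTop_nhds_zero_nat ((Dk k).totient : ℝ)) ?_
    exact tendsto_id
  rw [show (((Dk k).totient : ℝ) / ((j:ℝ) * ((Dk k):ℝ))) = ((Dk k).totient : ℝ) * (1 / ((j * Dk k : ℕ):ℝ)) by push_cast; ring]
  apply tendsto_of_tendsto_of_tendsto_of_le_of_le'
    (g := fun n : ℕ => ((Dk k).totient : ℝ) * ((n / (j * Dk k) : ℕ) : ℝ) / n)
    (h := fun n : ℕ => ((Dk k).totient : ℝ) * ((n / (j * Dk k) : ℕ) : ℝ) / n + ((Dk k).totient : ℝ) / n)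
  · apply Tendsto.congr' _ hmain
    filter_upwards [] with n
    ring
  · rw [show ((Dk k).totient : ℝ) * (1 / ((j * Dk k : ℕ):ℝ)) = ((Dk k).totient : ℝ) * (1 / ((j * Dk k : ℕ):ℝ)) + 0 by ring]
    apply Tendsto.add _ hzero
    apply Tendsto.congr' _ hmain
    filter_upwards [] with n
    ring
  · filter_upwards [] with n
    have h1 := (cc_bounds k (n / j)).1
    rw [← RF_eq_cc hk] at h1
    have : (n / j) / Dk k = n / (j * Dk k) := Nat.div_div_eq_div_mul n j (Dk k)
    rw [this] at h1
    rcases Nat.eq_zero_or_pos n with rfl | hn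
    · simp
    apply (div_le_div_iff_of_pos_right (by exact_mod_cast hn : (0:ℝ) < (n:ℝ))).2
    exact_mod_cast h1
  · filter_upwards [] with n
    have h2 := (cc_bounds k (n / j)).2
    rw [← RF_eq_cc hk] at h2
    have : (n / j) / Dk k = n / (j * Dk k) := Nat.div_div_eq_div_mul n j (Dk k)
    rw [this] at h2
    rcases Nat.eq_zero_or_pos n with rfl | hn
    · simp
    rw [← add_div]
    apply (div_le_div_iff_of_pos_right (by exact_mod_cast hn : (0:ℝ) < (n:ℝ))).2
    exact_mod_cast h2


lemma dg_nonneg (k i : ℕ) : 0 ≤ dg k i := by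
  rw [dg, sub_nonneg]; exact gk_mono k (by omega)

noncomputable def βk (k : ℕ) : ℝ :=
  ∑' i : ℕ, dg k i * (((Dk k).totient : ℝ) / (((i:ℝ)+1) * (Dk k)))

lemma abel_identity (k J : ℕ) :
    ∑ i ∈ Finset.range J, dg k i * (1/((i:ℝ)+1)) =
      gk k J / ((J:ℝ)+1) + ∑ i ∈ Finset.range J, gk k (i+1) / ((((i:ℝ)+1)) * ((i:ℝ)+2)) := by
  induction J with
  | zero => simp [gk_zero]
  | succ J ih =>
    rw [Finset.sum_range_succ, ih, Finset.sum_range_succ]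
    have h1 : ((J:ℝ)+1) ≠ 0 := by positivity
    have h2 : ((J:ℝ)+2) ≠ 0 := by positivity
    have hcast : ((J+1 : ℕ):ℝ) = (J:ℝ)+1 := by push_cast; ring
    rw [dg, hcast]
    field_simp
    ring

lemma sqrt_le_add_one (J : ℕ) : Real.sqrt J ≤ (J:ℝ) + 1 := by
  have h1 : (J:ℝ) ≤ ((J:ℝ)+1)^2 := by nlinarith [Nat.cast_nonneg J (α := ℝ)]
  calc Real.sqrt J ≤ Real.sqrt (((J:ℝ)+1)^2) := Real.sqrt_le_sqrt h1
    _ = (J:ℝ)+1 := Real.sqrt_sq (by positivity)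

lemma summable_S0 : Summable (fun i : ℕ => 1 / (((i:ℝ)+1) ^ ((3:ℝ)/2))) := by
  have h1 : Summable (fun n : ℕ => 1 / (n:ℝ) ^ ((3:ℝ)/2)) :=
    Real.summable_one_div_nat_rpow.mpr (by norm_num)
  have h2 := (summable_nat_add_iff 1).mpr h1
  apply h2.congr
  intro i
  push_cast
  ring_nf

lemma term_bound (i : ℕ) : Real.sqrt ((i:ℝ)+1) / ((((i:ℝ)+1)) * ((i:ℝ)+2)) ≤
    1 / (((i:ℝ)+1) ^ ((3:ℝ)/2)) := by
  set x : ℝ := (i:ℝ)+1 with hx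
  have hx1 : (1:ℝ) ≤ x := by rw [hx]; have := Nat.cast_nonneg i (α := ℝ); linarith
  have hx0 : (0:ℝ) < x := by linarith
  rw [div_le_div_iff₀ (by nlinarith) (by positivity)]
  have hs : Real.sqrt x = x ^ ((1:ℝ)/2) := Real.sqrt_eq_rpow x
  have hmul : x ^ ((1:ℝ)/2) * x ^ ((3:ℝ)/2) = x ^ (2:ℕ) := by
    rw [← Real.rpow_add hx0, show ((1:ℝ)/2 + 3/2) = ((2:ℕ):ℝ) by norm_num, Real.rpow_natCast]
  rw [hs, hmul]
  nlinarith

lemma summable_bound (k : ℕ) (hk : 1 ≤ k) :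
    Summable (fun i : ℕ => dg k i * (1/((i:ℝ)+1))) := by
  obtain ⟨C, hC0, hC⟩ := gk_sqrt_bound k hk
  have hnonneg : ∀ i, 0 ≤ dg k i * (1/((i:ℝ)+1)) := by
    intro i
    apply mul_nonneg (dg_nonneg k i)
    positivity
  apply summable_of_sum_range_le hnonneg (c := C + C * (∑' i : ℕ, 1 / (((i:ℝ)+1) ^ ((3:ℝ)/2))))
  intro J
  rw [abel_identity k J]
  have hA : gk k J / ((J:ℝ)+1) ≤ C := by
    have h1 : gk k J ≤ C * Real.sqrt J := hC J
    have h2 : C * Real.sqrt J ≤ C * ((J:ℝ)+1) := by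
      apply mul_le_mul_of_nonneg_left (sqrt_le_add_one J) (le_of_lt hC0)
    rw [div_le_iff₀ (by positivity)]
    linarith
  have hB : ∑ i ∈ Finset.range J, gk k (i+1) / ((((i:ℝ)+1)) * ((i:ℝ)+2)) ≤
      C * (∑' i : ℕ, 1 / (((i:ℝ)+1) ^ ((3:ℝ)/2))) := by
    have hterm : ∀ i : ℕ, gk k (i+1) / ((((i:ℝ)+1)) * ((i:ℝ)+2)) ≤
        C * (1 / (((i:ℝ)+1) ^ ((3:ℝ)/2))) := by
      intro i
      have h1 : gk k (i+1) ≤ C * Real.sqrt ((i:ℝ)+1) := by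
        have := hC (i+1)
        rwa [show ((i+1 : ℕ):ℝ) = (i:ℝ)+1 by push_cast; ring] at this
      calc gk k (i+1) / ((((i:ℝ)+1)) * ((i:ℝ)+2)) ≤
            (C * Real.sqrt ((i:ℝ)+1)) / ((((i:ℝ)+1)) * ((i:ℝ)+2)) := by
            have hpos : (0:ℝ) < (((i:ℝ)+1)) * ((i:ℝ)+2) := by positivity
            exact (div_le_div_iff_of_pos_right hpos).2 h1
        _ = C * (Real.sqrt ((i:ℝ)+1) / ((((i:ℝ)+1)) * ((i:ℝ)+2))) := by ring
        _ ≤ C * (1 / (((i:ℝ)+1) ^ ((3:ℝ)/2))) := by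
            apply mul_le_mul_of_nonneg_left (term_bound i) (le_of_lt hC0)
    calc ∑ i ∈ Finset.range J, gk k (i+1) / ((((i:ℝ)+1)) * ((i:ℝ)+2)) ≤
          ∑ i ∈ Finset.range J, C * (1 / (((i:ℝ)+1) ^ ((3:ℝ)/2))) :=
          Finset.sum_le_sum (fun i _ => hterm i)
      _ ≤ C * (∑' i : ℕ, 1 / (((i:ℝ)+1) ^ ((3:ℝ)/2))) := by
          rw [← tsum_mul_left]
          apply Summable.sum_le_tsum _ _ (summable_S0.mul_left C)
          intro i _
          positivity
  linarith

noncomputable def Afun (k n i : ℕ) : ℝ := dg k i * (((RF k (n / (i+1))).card : ℝ) / n)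

lemma tendsto_logG (k : ℕ) (hk : 1 ≤ k) :
    Tendsto (fun n : ℕ => Real.log (G k n) / n) atTop (𝓝 (βk k)) := by
  have hDCT : Tendsto (fun n : ℕ => ∑' i, Afun k n i) atTop (𝓝 (βk k)) := by
    rw [βk]
    apply tendsto_tsum_of_dominated_convergence (bound := fun i => dg k i * (1/((i:ℝ)+1)))
      (summable_bound k hk)
    · intro i
      have h := (RF_tendsto k (i+1) hk (by omega)).const_mul (dg k i)
      have hcast : ((i+1 : ℕ):ℝ) = (i:ℝ)+1 := by push_cast; ring
      rw [hcast] at h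
      exact h
    · filter_upwards [eventually_ge_atTop 1] with n hn
      intro i
      rw [Real.norm_eq_abs, abs_of_nonneg]
      · apply mul_le_mul_of_nonneg_left _ (dg_nonneg k i)
        have h1 : ((RF k (n / (i+1))).card : ℝ) ≤ ((n / (i+1) : ℕ) : ℝ) := by
          exact_mod_cast RF_card_le k (n / (i+1))
        have h2 : ((n / (i+1) : ℕ) : ℝ) ≤ (n:ℝ) / ((i:ℝ)+1) := by
          have := Nat.cast_div_le (α := ℝ) (m := n) (n := i+1)
          rwa [show ((i+1 : ℕ):ℝ) = (i:ℝ)+1 by push_cast; ring] at this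
        have hn' : (0:ℝ) < n := by exact_mod_cast hn
        calc ((RF k (n / (i+1))).card : ℝ) / n ≤ ((n:ℝ) / ((i:ℝ)+1)) / n := by
              apply (div_le_div_iff_of_pos_right hn').2 (h1.trans h2)
          _ = 1/((i:ℝ)+1) := by field_simp
      · apply mul_nonneg (dg_nonneg k i)
        positivity
  apply Tendsto.congr' _ hDCT
  filter_upwards [eventually_ge_atTop 1] with n hn
  have hzero : ∀ i ∉ Finset.range n, Afun k n i = 0 := by
    intro i hi
    rw [Finset.mem_range] at hi
    push_neg at hi
    have : n / (i+1) = 0 := Nat.div_eq_of_lt (by omega)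
    rw [Afun, this, RF_zero]
    simp
  rw [tsum_eq_sum hzero, log_G_eq, Finset.sum_div]
  apply Finset.sum_congr rfl
  intro i _
  rw [Afun, mul_div_assoc]


lemma f_pos (n : ℕ) : 0 < f n := by
  rw [f, Finset.card_pos]
  exact ⟨∅, Finset.mem_filter.2 ⟨Finset.empty_mem_powerset _, primitive_empty⟩⟩

lemma f_le_two_pow (n : ℕ) : f n ≤ 2 ^ n := by
  calc f n ≤ (Finset.Icc 1 n).powerset.card := Finset.card_le_card (Finset.filter_subset _ _)
    _ = 2 ^ n := by rw [Finset.card_powerset]; simp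

lemma two_pow_le_f (n : ℕ) : 2 ^ (n - n / 2) ≤ f n := by
  have hsub : (Finset.Icc (n/2 + 1) n).powerset ⊆ (Finset.Icc 1 n).powerset.filter Primitive := by
    intro S hS
    rw [Finset.mem_powerset] at hS
    rw [Finset.mem_filter, Finset.mem_powerset]
    constructor
    · exact hS.trans (Finset.Icc_subset_Icc (by omega) le_rfl)
    · intro a ha b hb hab hdvd
      have ha' := Finset.mem_Icc.1 (hS ha)
      have hb' := Finset.mem_Icc.1 (hS hb)
      obtain ⟨t, rfl⟩ := hdvd
      rcases Nat.lt_or_ge t 2 with ht | ht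
      · interval_cases t <;> omega
      · have h2a : a * 2 ≤ a * t := Nat.mul_le_mul_left a ht
        omega
  calc 2 ^ (n - n/2) = (Finset.Icc (n/2 + 1) n).powerset.card := by
        rw [Finset.card_powerset, Nat.card_Icc]
        congr 1
        omega
    _ ≤ f n := Finset.card_le_card hsub

noncomputable def aseq (n : ℕ) : ℝ := Real.log (f n) / n

lemma aseq_le (n : ℕ) (hn : 1 ≤ n) : aseq n ≤ Real.log 2 := by
  have h1 : Real.log (f n) ≤ n * Real.log 2 := by
    rw [← Real.log_pow]
    apply Real.log_le_log (by exact_mod_cast f_pos n)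
    exact_mod_cast f_le_two_pow n
  rw [aseq, div_le_iff₀ (by exact_mod_cast hn : (0:ℝ) < n)]
  linarith [mul_comm (n:ℝ) (Real.log 2)]

lemma le_aseq (n : ℕ) (hn : 1 ≤ n) : Real.log 2 / 2 ≤ aseq n := by
  have h1 : ((n - n/2 : ℕ) : ℝ) * Real.log 2 ≤ Real.log (f n) := by
    rw [← Real.log_pow]
    apply Real.log_le_log (by positivity)
    exact_mod_cast two_pow_le_f n
  have h2 : (n:ℝ)/2 ≤ ((n - n/2 : ℕ) : ℝ) := by
    have : 2 * (n - n/2) ≥ n := by omega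
    have := (by exact_mod_cast this : (2:ℝ) * ((n - n/2 : ℕ):ℝ) ≥ (n:ℝ))
    linarith
  have hl2 : (0:ℝ) ≤ Real.log 2 := Real.log_nonneg one_le_two
  rw [aseq, le_div_iff₀ (by exact_mod_cast hn : (0:ℝ) < n)]
  calc Real.log 2 / 2 * n = (n:ℝ)/2 * Real.log 2 := by ring
    _ ≤ ((n - n/2 : ℕ) : ℝ) * Real.log 2 := by nlinarith
    _ ≤ Real.log (f n) := h1

lemma aseq_le_b (k n : ℕ) : aseq n ≤ Real.log (G k n) / n := by
  rw [aseq]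
  rcases Nat.eq_zero_or_pos n with rfl | hn
  · norm_num
  apply (div_le_div_iff_of_pos_right (by exact_mod_cast hn : (0:ℝ) < (n:ℝ))).2
  apply Real.log_le_log (by exact_mod_cast f_pos n)
  exact_mod_cast f_le_G k n

lemma b_le_aseq (k n : ℕ) (hk : 1 ≤ k) (hn : 1 ≤ n) :
    Real.log (G k n) / n ≤ aseq n + Real.log 2 / (Nat.nth Nat.Prime k) := by
  set p := Nat.nth Nat.Prime k with hp
  have hppos : 0 < p := (Nat.prime_nth_prime k).pos
  have hn' : (0:ℝ) < n := by exact_mod_cast hn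
  have hp' : (0:ℝ) < p := by exact_mod_cast hppos
  have h1 : Real.log (G k n) ≤ Real.log (f n) + ((n/p : ℕ):ℝ) * Real.log 2 := by
    have h2 : (G k n : ℝ) ≤ (f n : ℝ) * 2 ^ (n/p : ℕ) := by exact_mod_cast G_le k n hk
    have hGpos : (0:ℝ) < G k n := by
      have := (f_pos n).trans_le (f_le_G k n)
      exact_mod_cast this
    calc Real.log (G k n) ≤ Real.log ((f n : ℝ) * 2 ^ (n/p : ℕ)) := Real.log_le_log hGpos h2
      _ = Real.log (f n) + ((n/p : ℕ):ℝ) * Real.log 2 := by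
          rw [Real.log_mul (by exact_mod_cast (f_pos n).ne') (by positivity), Real.log_pow]
  have h3 : ((n/p : ℕ):ℝ) * Real.log 2 / n ≤ Real.log 2 / p := by
    have hc : ((n/p : ℕ):ℝ) ≤ (n:ℝ)/p := Nat.cast_div_le
    have hl2 : (0:ℝ) ≤ Real.log 2 := Real.log_nonneg one_le_two
    rw [div_le_div_iff₀ hn' hp']
    calc ((n/p : ℕ):ℝ) * Real.log 2 * p ≤ ((n:ℝ)/p) * Real.log 2 * p := by
          apply mul_le_mul_of_nonneg_right _ (le_of_lt hp')
          exact mul_le_mul_of_nonneg_right hc hl2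
      _ = Real.log 2 * n := by field_simp
  calc Real.log (G k n) / n ≤ (Real.log (f n) + ((n/p : ℕ):ℝ) * Real.log 2) / n := by
        apply (div_le_div_iff_of_pos_right hn').2 h1
    _ = aseq n + ((n/p : ℕ):ℝ) * Real.log 2 / n := by rw [aseq, add_div]
    _ ≤ aseq n + Real.log 2 / p := by linarith

lemma nth_ge (k : ℕ) : (k:ℝ) ≤ (Nat.nth Nat.Prime k : ℝ) := by
  exact_mod_cast (Nat.nth_strictMono Nat.infinite_setOf_prime).id_le k

theorem main_tendsto : ∃ l : ℝ, Tendsto aseq atTop (𝓝 l) ∧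
    Real.log 2 / 2 ≤ l ∧ l ≤ Real.log 2 := by
  have hub : ∀ᶠ n in atTop, aseq n ≤ Real.log 2 := by
    filter_upwards [eventually_ge_atTop 1] with n hn; exact aseq_le n hn
  have hlb : ∀ᶠ n in atTop, Real.log 2 / 2 ≤ aseq n := by
    filter_upwards [eventually_ge_atTop 1] with n hn; exact le_aseq n hn
  have hbdd : IsBoundedUnder (· ≤ ·) atTop aseq := isBoundedUnder_of_eventually_le hub
  have hbdd' : IsBoundedUnder (· ≥ ·) atTop aseq := isBoundedUnder_of_eventually_ge hlb
  have hcob : IsCoboundedUnder (· ≤ ·) atTop aseq := hbdd'.isCoboundedUnder_le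
  have hcob' : IsCoboundedUnder (· ≥ ·) atTop aseq := hbdd.isCoboundedUnder_ge
  set ls := limsup aseq atTop with hls
  set li := liminf aseq atTop with hli
  have hkey : ∀ k : ℕ, 1 ≤ k → ls ≤ li + Real.log 2 / (Nat.nth Nat.Prime k) := by
    intro k hk
    have hv := tendsto_logG k hk
    have h1 : ls ≤ βk k := by
      have hmono := limsup_le_limsup (u := aseq) (v := fun n : ℕ => Real.log (G k n) / n)
        (Eventually.of_forall (fun n => aseq_le_b k n)) hcob hv.isBoundedUnder_le
      rwa [hv.limsup_eq] at hmono
    have h2 : βk k - Real.log 2 / (Nat.nth Nat.Prime k) ≤ li := by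
      have hv' : Tendsto (fun n : ℕ => Real.log (G k n) / n - Real.log 2 / (Nat.nth Nat.Prime k))
          atTop (𝓝 (βk k - Real.log 2 / (Nat.nth Nat.Prime k))) := hv.sub_const _
      have hmono := liminf_le_liminf
        (u := fun n : ℕ => Real.log (G k n) / n - Real.log 2 / (Nat.nth Nat.Prime k)) (v := aseq)
        ?_ hv'.isBoundedUnder_ge hcob'
      · rwa [hv'.liminf_eq] at hmono
      · filter_upwards [eventually_ge_atTop 1] with n hn
        have := b_le_aseq k n hk hn
        linarith
    linarith
  have hlsli : ls ≤ li := by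
    by_contra hcon
    push_neg at hcon
    set ε := ls - li with hε
    have hεpos : 0 < ε := by simp [hε]; linarith
    obtain ⟨k, hk1, hklt⟩ : ∃ k : ℕ, 1 ≤ k ∧ Real.log 2 / (Nat.nth Nat.Prime k) < ε := by
      set K := Nat.ceil (Real.log 2 / ε) + 1 with hK
      refine ⟨K, by omega, ?_⟩
      have hKpos : (0:ℝ) < K := by
        have : 1 ≤ K := by omega
        exact_mod_cast this
      have h1 : Real.log 2 / ε < K := by
        have := Nat.le_ceil (Real.log 2 / ε)
        have h2 : ((Nat.ceil (Real.log 2 / ε) : ℕ) : ℝ) < K := by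
          rw [hK]; push_cast; linarith
        linarith
      have hpK : (K:ℝ) ≤ (Nat.nth Nat.Prime K : ℝ) := nth_ge K
      have hppos : (0:ℝ) < (Nat.nth Nat.Prime K : ℝ) := by
        have := (Nat.prime_nth_prime K).pos; exact_mod_cast this
      have hlog2 : (0:ℝ) ≤ Real.log 2 := Real.log_nonneg one_le_two
      calc Real.log 2 / (Nat.nth Nat.Prime K : ℝ) ≤ Real.log 2 / (K:ℝ) := by
            apply div_le_div_of_nonneg_left hlog2 hKpos hpK
        _ < ε := by
            rw [div_lt_iff₀ hKpos]
            rw [div_lt_iff₀ hεpos] at h1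
            linarith [mul_comm ε (K:ℝ)]
    have := hkey k hk1
    linarith
  have hlils : li ≤ ls := liminf_le_limsup hbdd hbdd'
  have heq : li = ls := le_antisymm hlils hlsli
  refine ⟨ls, tendsto_of_liminf_eq_limsup heq rfl hbdd hbdd', ?_, ?_⟩
  · have : Real.log 2 / 2 ≤ li := le_liminf_of_le hcob' hlb
    linarith
  · exact limsup_le_of_le hcob hub


end CE

/-- Main theorem: `lim_n f(n)^{1/n}` exists and lies in `[√2, 2]`. -/
theorem stmt_16 :
    ∃ L : ℝ, Tendsto (fun n : ℕ => (f n : ℝ) ^ ((1 : ℝ) / n)) atTop (nhds L) ∧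
      Real.sqrt 2 ≤ L ∧ L ≤ 2 := by
  obtain ⟨l, hl, h1, h2⟩ := CE.main_tendsto
  refine ⟨Real.exp l, ?_, ?_, ?_⟩
  · have hfe : (fun n : ℕ => (f n : ℝ) ^ ((1:ℝ)/n)) = fun n => Real.exp (CE.aseq n) := by
      funext n
      rw [Real.rpow_def_of_pos (by exact_mod_cast CE.f_pos n), CE.aseq]
      congr 1
      ring
    rw [hfe]
    exact (Real.continuous_exp.tendsto l).comp hl
  · have hsqrt : Real.sqrt 2 = Real.exp (Real.log 2 / 2) := by
      rw [Real.sqrt_eq_rpow, Real.rpow_def_of_pos (by norm_num : (0:ℝ) < 2)]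
      congr 1
      ring
    rw [hsqrt]
    exact Real.exp_le_exp.2 h1
  · calc Real.exp l ≤ Real.exp (Real.log 2) := Real.exp_le_exp.2 h2
      _ = 2 := Real.exp_log (by norm_num)
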